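/- Let n ≥ 2, (a, b) ∈ Ω_n, and L = L⁽ⁿ⁾₍ₐ,ᵦ₎. Then Orb(L, ω^a) = Orb(L, 1) if and only if n/a is odd, and Orb(L, ω^b·j) = Orb(L, j) if and only if n/b is odd. -/

import Mathlib

noncomputable section

open Matrix

local notation "ℍ" => Quaternion ℝ

/-- The binary operation `a ∘ b = a * b⁻¹ * a`. -/
def circ {K : Type*} [Group K] (a b : K) : K := a * b⁻¹ * a

/-- A set is closed under `circ`. -/
def CircClosed {K : Type*} [Group K] (S : Set K) : Prop :=
  ∀ a ∈ S, ∀ b ∈ S, circ a b ∈ S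

/-- The closure of a set under `circ`: the smallest superset closed under `circ`. -/
def circClosure {K : Type*} [Group K] (X : Set K) : Set K :=
  ⋂₀ {S : Set K | X ⊆ S ∧ CircClosed S}

/-- `L` is a reflection system for the subgroup `K`. -/
def IsReflectionSystem {G : Type*} [Group G] (K : Subgroup G) (L : Set G) : Prop :=
  Subgroup.closure L = K ∧ CircClosed L ∧ (1 : G) ∈ L

/-- `H` is a normal subgroup of `K` (both given as subgroups of an ambient group). -/
def NormalIn {G : Type*} [Group G] (H K : Subgroup G) : Prop :=
  H ≤ K ∧ ∀ k ∈ K, ∀ h ∈ H, k * h * k⁻¹ ∈ H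

/-- The set `L·H`. -/
def mulSet {G : Type*} [Group G] (L : Set G) (H : Subgroup G) : Set G :=
  {x | ∃ l ∈ L, ∃ h ∈ H, x = l * h}

/-- The orbit of `b` in `L`: smallest subset of `L` containing `b` and closed under
`x ↦ a ∘ x` for all `a ∈ L`. -/
def orb {K : Type*} [Group K] (L : Set K) (b : K) : Set K :=
  ⋂₀ {S : Set K | b ∈ S ∧ S ⊆ L ∧ ∀ a ∈ L, ∀ x ∈ S, circ a x ∈ S}

lemma mk_ne_zero_re {a b c d : ℝ} (h : a ≠ 0) : (⟨a,b,c,d⟩ : ℍ) ≠ 0 :=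
  fun h0 => h (congrArg QuaternionAlgebra.re h0)

lemma mk_ne_zero_imI {a b c d : ℝ} (h : b ≠ 0) : (⟨a,b,c,d⟩ : ℍ) ≠ 0 :=
  fun h0 => h (congrArg QuaternionAlgebra.imI h0)

lemma mk_ne_zero_imJ {a b c d : ℝ} (h : c ≠ 0) : (⟨a,b,c,d⟩ : ℍ) ≠ 0 :=
  fun h0 => h (congrArg QuaternionAlgebra.imJ h0)

lemma mk_ne_zero_imK {a b c d : ℝ} (h : d ≠ 0) : (⟨a,b,c,d⟩ : ℍ) ≠ 0 :=
  fun h0 => h (congrArg QuaternionAlgebra.imK h0)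

/-- The quaternion `i` as a unit. -/
def iU : ℍˣ := Units.mk0 (⟨0,1,0,0⟩ : ℍ) (mk_ne_zero_imI one_ne_zero)

/-- The quaternion `j` as a unit. -/
def jU : ℍˣ := Units.mk0 (⟨0,0,1,0⟩ : ℍ) (mk_ne_zero_imJ one_ne_zero)

/-- The quaternion `k` as a unit. -/
def kU : ℍˣ := Units.mk0 (⟨0,0,0,1⟩ : ℍ) (mk_ne_zero_imK one_ne_zero)

/-- The quaternion `ζ = (1+i+j+k)/2` as a unit. -/
def zetaU : ℍˣ := Units.mk0 (⟨1/2,1/2,1/2,1/2⟩ : ℍ) (mk_ne_zero_re (by norm_num))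

/-- The quaternion `(1+i)/√2` as a unit. -/
def e1iU : ℍˣ :=
  Units.mk0 (⟨1/Real.sqrt 2, 1/Real.sqrt 2, 0, 0⟩ : ℍ)
    (mk_ne_zero_re (by positivity))

/-- The quaternion `(j-k)/√2` as a unit. -/
def jmkU : ℍˣ :=
  Units.mk0 (⟨0, 0, 1/Real.sqrt 2, -(1/Real.sqrt 2)⟩ : ℍ)
    (mk_ne_zero_imJ (by positivity))

/-- The quaternion `(1 + τ i + σ j)/2`, `τ = (1+√5)/2`, `σ = (1-√5)/2`, as a unit. -/
def iotaU : ℍˣ :=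
  Units.mk0 (⟨1/2, ((1+Real.sqrt 5)/2)/2, ((1-Real.sqrt 5)/2)/2, 0⟩ : ℍ)
    (mk_ne_zero_re (by norm_num))

lemma omega_ne_zero (n : ℕ) :
    (⟨Real.cos (Real.pi / n), Real.sin (Real.pi / n), 0, 0⟩ : ℍ) ≠ 0 := by
  intro h0
  have h1 : Real.cos (Real.pi / n) = 0 := congrArg QuaternionAlgebra.re h0
  have h2 : Real.sin (Real.pi / n) = 0 := congrArg QuaternionAlgebra.imI h0
  have := Real.sin_sq_add_cos_sq (Real.pi / n)
  rw [h1, h2] at this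
  norm_num at this

/-- The primitive `2n`-th root of unity `ω = cos(π/n) + sin(π/n) i` as a unit quaternion. -/
def omegaU (n : ℕ) : ℍˣ :=
  Units.mk0 (⟨Real.cos (Real.pi / n), Real.sin (Real.pi / n), 0, 0⟩ : ℍ) (omega_ne_zero n)

/-- The dicyclic group `𝒟ₙ = ⟨ω, j⟩` of order `4n`. -/
def dicyclic (n : ℕ) : Subgroup ℍˣ := Subgroup.closure {omegaU n, jU}

/-- The binary tetrahedral group `𝒯`. -/
def binTet : Subgroup ℍˣ := Subgroup.closure {iU, zetaU}

/-- The binary octahedral group `𝒪`. -/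
def binOct : Subgroup ℍˣ := Subgroup.closure {e1iU, zetaU}

/-- The binary icosahedral group `ℐ`. -/
def binIco : Subgroup ℍˣ := Subgroup.closure {iU, zetaU, iotaU}

/-- `GL₂(ℍ)` as the unit group of the matrix ring. -/
abbrev GL2H := (Matrix (Fin 2) (Fin 2) ℍ)ˣ

def M2 (b : ℍˣ) : Matrix (Fin 2) (Fin 2) ℍ := !![0, (b : ℍ); ((b⁻¹ : ℍˣ) : ℍ), 0]

lemma M2_mul_self (b : ℍˣ) : M2 b * M2 b = 1 := by
  refine Matrix.ext fun i j => ?_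
  fin_cases i <;> fin_cases j <;>
    simp [M2, Matrix.mul_apply, Fin.sum_univ_two, Matrix.one_apply]

/-- The matrix `M_b = [[0, b], [b⁻¹, 0]]` as an element of `GL₂(ℍ)`. -/
def Mb (b : ℍˣ) : GL2H := ⟨M2 b, M2 b, M2_mul_self b, M2_mul_self b⟩

def D1M (h : ℍˣ) : Matrix (Fin 2) (Fin 2) ℍ := !![(h : ℍ), 0; 0, 1]

lemma D1M_mul_inv (h : ℍˣ) : D1M h * D1M h⁻¹ = 1 := by
  refine Matrix.ext fun i j => ?_
  fin_cases i <;> fin_cases j <;>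
    simp [D1M, Matrix.mul_apply, Fin.sum_univ_two, Matrix.one_apply]

lemma D1M_inv_mul (h : ℍˣ) : D1M h⁻¹ * D1M h = 1 := by
  refine Matrix.ext fun i j => ?_
  fin_cases i <;> fin_cases j <;>
    simp [D1M, Matrix.mul_apply, Fin.sum_univ_two, Matrix.one_apply]

/-- The matrix `D₁(h) = diag(h, 1)` as an element of `GL₂(ℍ)`. -/
def D1 (h : ℍˣ) : GL2H := ⟨D1M h, D1M h⁻¹, D1M_mul_inv h, D1M_inv_mul h⟩

def D2M (h : ℍˣ) : Matrix (Fin 2) (Fin 2) ℍ := !![1, 0; 0, (h : ℍ)]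

lemma D2M_mul_inv (h : ℍˣ) : D2M h * D2M h⁻¹ = 1 := by
  refine Matrix.ext fun i j => ?_
  fin_cases i <;> fin_cases j <;>
    simp [D2M, Matrix.mul_apply, Fin.sum_univ_two, Matrix.one_apply]

lemma D2M_inv_mul (h : ℍˣ) : D2M h⁻¹ * D2M h = 1 := by
  refine Matrix.ext fun i j => ?_
  fin_cases i <;> fin_cases j <;>
    simp [D2M, Matrix.mul_apply, Fin.sum_univ_two, Matrix.one_apply]

/-- The matrix `D₂(h) = diag(1, h)` as an element of `GL₂(ℍ)`. -/
def D2 (h : ℍˣ) : GL2H := ⟨D2M h, D2M h⁻¹, D2M_mul_inv h, D2M_inv_mul h⟩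

/-- The group `G(K, L, H)`, generated by `D₁(H)`, `D₂(H)` and `M_L`. -/
def GKLH (H : Subgroup ℍˣ) (L : Set ℍˣ) : Subgroup GL2H :=
  Subgroup.closure (D1 '' (H : Set ℍˣ) ∪ D2 '' (H : Set ℍˣ) ∪ Mb '' L)

/-- `G(K,L,H)` is in canonical form: every `b ∈ K` with `M_b ∈ G(K,L,H)` lies in `L`. -/
def CanonicalForm (K : Subgroup ℍˣ) (H : Subgroup ℍˣ) (L : Set ℍˣ) : Prop :=
  ∀ b : ℍˣ, b ∈ K → Mb b ∈ GKLH H L → b ∈ L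

/-- A reflection: a non-identity element fixing a nonzero vector. -/
def IsReflection (g : GL2H) : Prop :=
  g ≠ 1 ∧ ∃ v : Fin 2 → ℍ, v ≠ 0 ∧ Matrix.mulVec (Units.val g) v = v

/-- The number of reflections in a subgroup of `GL₂(ℍ)`. -/
def reflCount (G : Subgroup GL2H) : ℕ :=
  Nat.card {g : GL2H // g ∈ G ∧ IsReflection g}

/-- The index set `Ω_n`. -/
def OmegaMem (n a b : ℕ) : Prop :=
  1 ≤ a ∧ a ≤ b ∧ b ≤ n ∧ a ∣ n ∧ b ∣ n ∧ Nat.gcd a b = 1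

/-- The reflection system `L⁽ⁿ⁾₍ₐ,ᵦ₎`. -/
def Lab (n a b : ℕ) : Set ℍˣ :=
  {x | ∃ m, 1 ≤ m ∧ m ≤ 2 * n / a ∧ x = omegaU n ^ (m * a)} ∪
  {x | ∃ l, 1 ≤ l ∧ l ≤ 2 * n / b ∧ x = omegaU n ^ (l * b) * jU}

/-- The reflection group `G(n, a, b, r)`. -/
def Gnabr (n a b r : ℕ) : Subgroup GL2H :=
  Subgroup.closure
    ({Mb 1, Mb (omegaU n ^ a), Mb jU, Mb (omegaU n ^ b * jU), D1 (omegaU n ^ (2 * n / r))})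


/-! ### Auxiliary lemmas for statement_12 -/

section QuatBase

lemma deMoivre' (θ : ℝ) : ∀ m : ℕ, (⟨Real.cos θ, Real.sin θ,0,0⟩ : ℍ)^m
    = ⟨Real.cos (m*θ), Real.sin (m*θ),0,0⟩
  | 0 => by ext <;> simp
  | (m+1) => by
      rw [_root_.pow_succ, deMoivre' θ m]
      have h1 : ((m:ℝ)+1)*θ = m*θ + θ := by ring
      ext <;>
        simp [Quaternion.re_mul, Quaternion.imI_mul, Quaternion.imJ_mul,
          Quaternion.imK_mul, h1, Real.cos_add, Real.sin_add] <;> ring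

lemma omega_pow_val (n m : ℕ) : (((omegaU n)^m : ℍˣ) : ℍ)
    = ⟨Real.cos (m*(Real.pi/n)), Real.sin (m*(Real.pi/n)),0,0⟩ := by
  rw [Units.val_pow_eq_pow_val]
  exact deMoivre' _ m

lemma omega_npow {n : ℕ} (hn : 2 ≤ n) : (omegaU n)^n = -1 := by
  have hn0 : (n:ℝ) ≠ 0 := by positivity
  apply Units.ext
  rw [omega_pow_val]
  have h1 : (n:ℝ)*(Real.pi/n) = Real.pi := by field_simp
  rw [h1, Real.cos_pi, Real.sin_pi]
  show _ = (-1 : ℍ)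
  ext <;> simp [Quaternion.re_one, Quaternion.imI_one, Quaternion.imJ_one, Quaternion.imK_one]

lemma quat_rel1 (c s : ℝ) (h : s^2+c^2 = 1) :
    (⟨c,s,0,0⟩:ℍ) * ⟨0,0,1,0⟩ * ⟨c,s,0,0⟩ = ⟨0,0,1,0⟩ := by
  ext <;> simp [Quaternion.re_mul, Quaternion.imI_mul, Quaternion.imJ_mul,
    Quaternion.imK_mul] <;> nlinarith [h]

lemma hWJW (n : ℕ) : omegaU n * jU * omegaU n = jU := by
  apply Units.ext
  rw [Units.val_mul, Units.val_mul]
  exact quat_rel1 _ _ (Real.sin_sq_add_cos_sq _)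

lemma hJJ {n : ℕ} (hn : 2 ≤ n) : jU * jU = (omegaU n)^n := by
  rw [omega_npow hn]
  apply Units.ext
  rw [Units.val_mul]
  have hq : (⟨0,0,1,0⟩:ℍ) * (⟨0,0,1,0⟩:ℍ) = ((-1 : ℍˣ) : ℍ) := by
    rw [Units.val_neg, Units.val_one]
    ext <;> simp [Quaternion.re_mul, Quaternion.imI_mul, Quaternion.imJ_mul,
      Quaternion.imK_mul, Quaternion.re_one, Quaternion.imI_one, Quaternion.imJ_one,
      Quaternion.imK_one]
  exact hq

lemma omega_two_npow {n : ℕ} (hn : 2 ≤ n) : (omegaU n)^(2*n) = 1 := by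
  rw [mul_comm, _root_.pow_mul, omega_npow hn, neg_one_sq]

lemma omega_inj_nat {n : ℕ} (hn : 2 ≤ n) (m : ℕ) (h : (omegaU n)^m = 1) : 2*n ∣ m := by
  have hv : Real.cos (m*(Real.pi/n)) = 1 := by
    have hval : (((omegaU n)^m : ℍˣ) : ℍ) = ((1 : ℍˣ) : ℍ) := congrArg Units.val h
    rw [omega_pow_val, Units.val_one] at hval
    simpa [Quaternion.re_one] using congrArg QuaternionAlgebra.re hval
  obtain ⟨k, hk⟩ := (Real.cos_eq_one_iff _).1 hv
  have hn0 : (n:ℝ) ≠ 0 := by positivity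
  have h2 : ((k*(2*n) : ℤ) : ℝ) = ((m:ℤ) : ℝ) := by
    push_cast
    field_simp at hk
    nlinarith [hk, Real.pi_pos]
  have h3 : (k*(2*n) : ℤ) = m := Int.cast_injective h2
  have hk0 : 0 ≤ k := by nlinarith [h3, Int.ofNat_nonneg m]
  refine ⟨k.toNat, ?_⟩
  have h4 : (m:ℤ) = ((2*n : ℕ):ℤ) * (k.toNat:ℤ) := by
    rw [Int.toNat_of_nonneg hk0]; push_cast; linarith
  exact_mod_cast h4

lemma omega_inj_int {n : ℕ} (hn : 2 ≤ n) (e : ℤ) (h : (omegaU n)^e = 1) :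
    (2*(n:ℤ)) ∣ e := by
  have hnat : (omegaU n)^(e.natAbs) = 1 := by
    rcases Int.natAbs_eq e with he | he
    · rw [he] at h; rw [← _root_.zpow_natCast]; exact h
    · rw [he, _root_.zpow_neg] at h
      rw [← _root_.zpow_natCast]
      exact _root_.inv_eq_one.mp h
  have := omega_inj_nat hn _ hnat
  have h2 : ((2*n : ℕ):ℤ) ∣ (e.natAbs : ℤ) := Int.natCast_dvd_natCast.mpr this
  have h3 := Int.dvd_natAbs.mp h2
  exact_mod_cast h3

end QuatBase

section GroupRel
variable {G : Type*} [Group G] {w j : G} {N : ℕ}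

lemma jw_rel (hwjw : w * j * w = j) (e : ℤ) : j * w ^ e = w ^ (-e) * j := by
  have h0 : j * w = w⁻¹ * j := by
    have := congrArg (fun x => w⁻¹ * x) hwjw
    simpa [mul_assoc] using this
  have hsc : SemiconjBy j w w⁻¹ := h0
  have h := hsc.zpow_right e
  rwa [SemiconjBy, _root_.inv_zpow'] at h

lemma jinv_rel (hjj : j * j = w ^ N) : j⁻¹ = w ^ (-(N:ℤ)) * j := by
  have h0 : (j * j)⁻¹ * j = j⁻¹ := by group
  rw [← h0, hjj, ← _root_.zpow_natCast w N, ← _root_.zpow_neg]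

lemma circ_rot_rot (u v : ℤ) : circ (w^u) (w^v) = w^(u + -v + u) := by
  unfold circ
  rw [← _root_.zpow_neg, ← _root_.zpow_add, ← _root_.zpow_add]

lemma circ_rot_one (u : ℤ) : circ (w^u) 1 = w^(u + u) := by
  unfold circ
  rw [inv_one, mul_one, ← _root_.zpow_add]

lemma circ_ref_rot (hwjw : w * j * w = j) (hjj : j * j = w ^ N) (u v : ℤ) :
    circ (w^u * j) (w^v) = w^(v + N) := by
  unfold circ
  rw [← _root_.zpow_neg]
  calc w ^ u * j * w ^ (-v) * (w ^ u * j)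
      = w ^ u * (j * w ^ (-v)) * w ^ u * j := by group
    _ = w ^ u * (w ^ v * j) * w ^ u * j := by rw [jw_rel hwjw]; ring_nf
    _ = w ^ u * w ^ v * (j * w ^ u) * j := by group
    _ = w ^ u * w ^ v * (w ^ (-u) * j) * j := by rw [jw_rel hwjw]
    _ = w ^ u * w ^ v * w ^ (-u) * (j * j) := by group
    _ = w ^ (v + N) := by
        rw [hjj, ← _root_.zpow_natCast w N, ← _root_.zpow_add, ← _root_.zpow_add, ← _root_.zpow_add,
          show u + v + -u + (N:ℤ) = v + N from by ring]

lemma circ_rot_ref (hwjw : w * j * w = j) (hjj : j * j = w ^ N) (u v : ℤ) :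
    circ (w^u) (w^v * j) = w^(v - N) * j := by
  unfold circ
  rw [_root_.mul_inv_rev, ← _root_.zpow_neg, jinv_rel hjj]
  calc w ^ u * (w ^ (-(N:ℤ)) * j * w ^ (-v)) * w ^ u
      = w ^ u * w ^ (-(N:ℤ)) * (j * w ^ (-v + u)) := by rw [_root_.zpow_add]; group
    _ = w ^ u * w ^ (-(N:ℤ)) * (w ^ (-(-v + u)) * j) := by rw [jw_rel hwjw]
    _ = w ^ (v - N) * j := by
        rw [← mul_assoc, ← _root_.zpow_add, ← _root_.zpow_add,
          show u + -(N:ℤ) + -(-v + u) = v - N from by ring]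

lemma circ_ref_ref (u v : ℤ) : circ (w^u * j) (w^v * j) = w^(u + -v + u) * j := by
  unfold circ
  rw [_root_.mul_inv_rev, ← _root_.zpow_neg]
  calc w^u * j * (j⁻¹ * w^(-v)) * (w^u * j)
      = w^u * w^(-v) * w^u * j := by group
    _ = w^(u + -v + u) * j := by rw [← _root_.zpow_add, ← _root_.zpow_add]

lemma zpow_eq_of_dvd_sub {w : G} (hw : w^N = 1)
    {e f : ℤ} (h : (N:ℤ) ∣ e - f) : w^e = w^f := by
  obtain ⟨k, hk⟩ := h
  have he : e = f + N*k := by linarith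
  rw [he, _root_.zpow_add, _root_.zpow_mul, _root_.zpow_natCast, hw, _root_.one_zpow, mul_one]

end GroupRel

section OrbLemmas
variable {K : Type*} [Group K] {L : Set K} {x y z a : K}

lemma circ_circ (a x : K) : circ a (circ a x) = x := by unfold circ; group

lemma mem_orb_self (x : K) : x ∈ orb L x :=
  Set.mem_sInter.mpr fun _ hS => hS.1

lemma orb_le {S : Set K} (h1 : y ∈ S) (h2 : S ⊆ L)
    (h3 : ∀ a ∈ L, ∀ x ∈ S, circ a x ∈ S) : orb L y ⊆ S :=
  Set.sInter_subset_of_mem ⟨h1, h2, h3⟩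

lemma orb_subset (hL : CircClosed L) (hy : y ∈ L) : orb L y ⊆ L :=
  orb_le hy subset_rfl hL

lemma orb_closed (ha : a ∈ L) (hx : x ∈ orb L y) : circ a x ∈ orb L y :=
  Set.mem_sInter.mpr fun S hS => hS.2.2 a ha x (Set.mem_sInter.mp hx S hS)

lemma orb_mono (hL : CircClosed L) (hz : z ∈ L) (hx : x ∈ orb L z) :
    orb L x ⊆ orb L z :=
  orb_le hx (orb_subset hL hz) fun a' ha' u hu => orb_closed ha' hu

lemma orb_symm (hL : CircClosed L) (hy : y ∈ L) (hx : x ∈ orb L y) : y ∈ orb L x := by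
  have hsub : orb L y ⊆ {v | v ∈ orb L y ∧ y ∈ orb L v} := by
    apply orb_le
    · exact ⟨mem_orb_self y, mem_orb_self y⟩
    · exact fun v hv => orb_subset hL hy hv.1
    · rintro a' ha' v ⟨hv1, hv2⟩
      refine ⟨orb_closed ha' hv1, ?_⟩
      have hvL : v ∈ L := orb_subset hL hy hv1
      have hcvL : circ a' v ∈ L := hL a' ha' v hvL
      have hvm : v ∈ orb L (circ a' v) := by
        have := orb_closed (y := circ a' v) ha' (mem_orb_self (circ a' v))
        rwa [circ_circ] at this
      exact orb_mono hL hcvL hvm hv2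
  exact (hsub hx).2

lemma orb_eq_iff (hL : CircClosed L) (hx : x ∈ L) (hy : y ∈ L) :
    orb L x = orb L y ↔ x ∈ orb L y := by
  constructor
  · intro h; rw [← h]; exact mem_orb_self x
  · intro h
    apply Set.Subset.antisymm
    · exact orb_mono hL hy h
    · exact orb_mono hL hx (orb_symm hL hy h)

end OrbLemmas

section LabLemmas
variable {n a b : ℕ}

lemma rot_reduce {n a : ℕ} (hn : 2 ≤ n) (han : a ∣ n) (e : ℤ) (hae : (a:ℤ) ∣ e) :
    ∃ m : ℕ, 1 ≤ m ∧ m ≤ 2*n/a ∧ (omegaU n)^e = (omegaU n)^(m*a) := by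
  have ha : 1 ≤ a := Nat.one_le_iff_ne_zero.mpr (by rintro rfl; omega)
  have haln : a ≤ n := Nat.le_of_dvd (by omega) han
  have ha2n : a ∣ 2*n := Dvd.dvd.mul_left han 2
  have hq2 : (2*n/a) * a = 2*n := Nat.div_mul_cancel ha2n
  set q2 := 2*n/a with hq2d
  have hq2pos : 0 < q2 := Nat.div_pos (by omega) (by omega)
  obtain ⟨s, hs⟩ := hae
  have hq2z : (0:ℤ) < (q2:ℤ) := by exact_mod_cast hq2pos
  set r := s % (q2:ℤ) with hrd
  have hr0 : 0 ≤ r := Int.emod_nonneg s (by omega)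
  have hrlt : r < (q2:ℤ) := Int.emod_lt_of_pos s hq2z
  set m : ℤ := if r = 0 then (q2:ℤ) else r with hmd
  have hm1 : 1 ≤ m := by rw [hmd]; split <;> omega
  have hm2 : m ≤ (q2:ℤ) := by rw [hmd]; split <;> omega
  have hdiv : s - r = (q2:ℤ) * (s / (q2:ℤ)) := by
    have := Int.mul_ediv_add_emod s (q2:ℤ)
    rw [hrd]; linarith
  have hdvd : (q2:ℤ) ∣ s - m := by
    rw [hmd]; split
    · rename_i h
      refine ⟨s / (q2:ℤ) - 1, ?_⟩
      rw [h] at hdiv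
      linarith [hdiv]
    · exact ⟨s / (q2:ℤ), by linarith [hdiv]⟩
  refine ⟨m.toNat, by omega, by omega, ?_⟩
  rw [← _root_.zpow_natCast (omegaU n) (m.toNat * a)]
  apply zpow_eq_of_dvd_sub (omega_two_npow hn)
  obtain ⟨k, hk⟩ := hdvd
  refine ⟨k, ?_⟩
  have hmt : ((m.toNat:ℤ)) = m := Int.toNat_of_nonneg (by omega)
  have hq2' : ((2*n : ℕ):ℤ) = (q2:ℤ)*(a:ℤ) := by exact_mod_cast hq2.symm
  push_cast
  rw [hmt, hs]
  push_cast at hq2'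
  calc (a:ℤ) * s - m * (a:ℤ) = (a:ℤ) * (s - m) := by ring
    _ = ((q2:ℤ) * (a:ℤ)) * k := by rw [hk]; ring
    _ = 2 * (n:ℤ) * k := by rw [← hq2']

lemma rot_mem {n a b : ℕ} (hn : 2 ≤ n) (han : a ∣ n) (e : ℤ) (hae : (a:ℤ) ∣ e) :
    (omegaU n)^e ∈ Lab n a b := by
  obtain ⟨m, hm1, hm2, hm3⟩ := rot_reduce hn han e hae
  exact Or.inl ⟨m, hm1, hm2, hm3⟩

lemma ref_mem (hn : 2 ≤ n) (hbn : b ∣ n) (e : ℤ) (hbe : (b:ℤ) ∣ e) :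
    (omegaU n)^e * jU ∈ Lab n a b := by
  obtain ⟨m, hm1, hm2, hm3⟩ := rot_reduce hn hbn e hbe
  exact Or.inr ⟨m, hm1, hm2, by rw [hm3]⟩

lemma circClosed_Lab (hn : 2 ≤ n) (han : a ∣ n) (hbn : b ∣ n) :
    CircClosed (Lab n a b) := by
  have hwjw := hWJW n
  have hjj := hJJ (n := n) hn
  rintro x hx y hy
  rcases hx with ⟨m, hm1, hm2, rfl⟩ | ⟨l, hl1, hl2, rfl⟩ <;>
    rcases hy with ⟨m', hm1', hm2', rfl⟩ | ⟨l', hl1', hl2', rfl⟩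
  · rw [← _root_.zpow_natCast (omegaU n) (m*a), ← _root_.zpow_natCast (omegaU n) (m'*a),
      circ_rot_rot]
    exact rot_mem hn han _ ⟨(m:ℤ) + -((m':ℤ)) + m, by push_cast; ring⟩
  · rw [← _root_.zpow_natCast (omegaU n) (m*a), ← _root_.zpow_natCast (omegaU n) (l'*b),
      circ_rot_ref hwjw hjj]
    refine ref_mem hn hbn _ ?_
    obtain ⟨c, hc⟩ := hbn
    exact ⟨(l':ℤ) - c, by push_cast; rw [hc]; push_cast; ring⟩
  · rw [← _root_.zpow_natCast (omegaU n) (l*b), ← _root_.zpow_natCast (omegaU n) (m'*a),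
      circ_ref_rot hwjw hjj]
    refine rot_mem hn han _ ?_
    obtain ⟨c, hc⟩ := han
    exact ⟨(m':ℤ) + c, by push_cast; rw [hc]; push_cast; ring⟩
  · rw [← _root_.zpow_natCast (omegaU n) (l*b), ← _root_.zpow_natCast (omegaU n) (l'*b),
      circ_ref_ref]
    exact ref_mem hn hbn _ ⟨(l:ℤ) + -((l':ℤ)) + l, by push_cast; ring⟩

lemma one_mem_Lab (hn : 2 ≤ n) (han : a ∣ n) : (1 : ℍˣ) ∈ Lab n a b := by
  have := rot_mem (b := b) hn han 0 ⟨0, by ring⟩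
  rwa [_root_.zpow_zero] at this

lemma jU_mem_Lab (hn : 2 ≤ n) (hbn : b ∣ n) : jU ∈ Lab n a b := by
  have := ref_mem (a := a) hn hbn 0 ⟨0, by ring⟩
  rwa [_root_.zpow_zero, one_mul] at this

lemma rot_pow_mem_Lab (hn : 2 ≤ n) (han : a ∣ n) : (omegaU n)^a ∈ Lab n a b := by
  have := rot_mem (b := b) hn han (a:ℤ) ⟨1, by ring⟩
  rwa [_root_.zpow_natCast] at this

lemma ref_pow_mem_Lab (hn : 2 ≤ n) (hbn : b ∣ n) :
    (omegaU n)^b * jU ∈ Lab n a b := by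
  have := ref_mem (a := a) hn hbn (b:ℤ) ⟨1, by ring⟩
  rwa [_root_.zpow_natCast] at this

end LabLemmas

section MainMem
variable {n a b : ℕ}

lemma mem_rot_orbit_iff (hn : 2 ≤ n) (han : a ∣ n) (hbn : b ∣ n) :
    (omegaU n)^a ∈ orb (Lab n a b) 1 ↔ Odd (n/a) := by
  have hwjw := hWJW n
  have hjj := hJJ (n := n) hn
  have ha : 0 < a := Nat.pos_of_dvd_of_pos han (by omega)
  have hq : a * (n/a) = n := Nat.mul_div_cancel' han
  constructor
  · intro hmem
    by_contra hodd
    rw [Nat.not_odd_iff_even] at hodd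
    obtain ⟨t, ht⟩ := hodd
    have hna : (n:ℤ) = 2*a*t := by
      have h1 : n = a*(t+t) := by rw [← hq, ht]
      push_cast [h1]; ring
    have hsub : orb (Lab n a b) 1 ⊆
        {x | x ∈ Lab n a b ∧ ∃ e : ℤ, x = (omegaU n)^e ∧ (2*(a:ℤ)) ∣ e} := by
      apply orb_le
      · exact ⟨one_mem_Lab hn han, 0, (_root_.zpow_zero _).symm, ⟨0, by ring⟩⟩
      · exact fun x hx => hx.1
      · rintro α hα x ⟨hxL, e, rfl, c, hc⟩
        refine ⟨circClosed_Lab hn han hbn α hα _ hxL, ?_⟩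
        rcases hα with ⟨m, hm1, hm2, rfl⟩ | ⟨l, hl1, hl2, rfl⟩
        · rw [← _root_.zpow_natCast (omegaU n) (m*a), circ_rot_rot]
          exact ⟨_, rfl, (m:ℤ) - c, by push_cast; rw [hc]; ring⟩
        · rw [← _root_.zpow_natCast (omegaU n) (l*b), circ_ref_rot hwjw hjj]
          exact ⟨_, rfl, c + t, by rw [hc, hna]; ring⟩
    obtain ⟨_, e, heq, c, hc⟩ := hsub hmem
    have heq' : (omegaU n)^((a:ℤ)) = (omegaU n)^e := by rw [_root_.zpow_natCast]; exact heq
    have h0 : (omegaU n)^((a:ℤ) - e) = 1 := by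
      rw [_root_.zpow_sub, heq', _root_.mul_inv_cancel]
    have hdvd2n := omega_inj_int hn _ h0
    have h2a : (2*(a:ℤ)) ∣ (a:ℤ) := by
      have h2a2n : (2*(a:ℤ)) ∣ 2*(n:ℤ) := ⟨2*t, by rw [hna]; ring⟩
      have h1 : (2*(a:ℤ)) ∣ ((a:ℤ) - e) := dvd_trans h2a2n hdvd2n
      have h2 := dvd_add h1 ⟨c, hc⟩
      simpa using h2
    have hle := Int.le_of_dvd (by exact_mod_cast ha) h2a
    omega
  · rintro ⟨t, ht⟩
    have hna : (n:ℤ) = a*(2*t+1) := by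
      have h1 : n = a*(2*t+1) := by rw [← hq, ht]
      exact_mod_cast h1
    have hα : (omegaU n)^((3*(t:ℤ)+2)*a) ∈ Lab n a b :=
      rot_mem hn han _ ⟨3*t+2, by ring⟩
    have h1 := orb_closed hα (mem_orb_self (1 : ℍˣ))
    rw [circ_rot_one] at h1
    have h2 := orb_closed (jU_mem_Lab (a := a) hn hbn) h1
    have hcirc : circ jU ((omegaU n)^((3*(t:ℤ)+2)*a + (3*(t:ℤ)+2)*a))
        = (omegaU n)^(((3*(t:ℤ)+2)*a + (3*(t:ℤ)+2)*a) + n) := by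
      have h := circ_ref_rot hwjw hjj 0 ((3*(t:ℤ)+2)*(a:ℤ) + (3*(t:ℤ)+2)*a)
      rwa [_root_.zpow_zero, one_mul] at h
    rw [hcirc] at h2
    have hfin : (omegaU n)^a
        = (omegaU n)^(((3*(t:ℤ)+2)*(a:ℤ) + (3*(t:ℤ)+2)*a) + n) := by
      rw [← _root_.zpow_natCast (omegaU n) a]
      apply zpow_eq_of_dvd_sub (omega_two_npow hn)
      refine ⟨-2, ?_⟩
      push_cast
      rw [hna]; try ring
    rw [hfin]
    exact h2

lemma mem_ref_orbit_iff (hn : 2 ≤ n) (han : a ∣ n) (hbn : b ∣ n) :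
    (omegaU n)^b * jU ∈ orb (Lab n a b) jU ↔ Odd (n/b) := by
  have hwjw := hWJW n
  have hjj := hJJ (n := n) hn
  have hb : 0 < b := Nat.pos_of_dvd_of_pos hbn (by omega)
  have hq : b * (n/b) = n := Nat.mul_div_cancel' hbn
  constructor
  · intro hmem
    by_contra hodd
    rw [Nat.not_odd_iff_even] at hodd
    obtain ⟨t, ht⟩ := hodd
    have hnb : (n:ℤ) = 2*b*t := by
      have h1 : n = b*(t+t) := by rw [← hq, ht]
      push_cast [h1]; ring
    have hsub : orb (Lab n a b) jU ⊆
        {x | x ∈ Lab n a b ∧ ∃ e : ℤ, x = (omegaU n)^e * jU ∧ (2*(b:ℤ)) ∣ e} := by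
      apply orb_le
      · exact ⟨jU_mem_Lab (a := a) hn hbn, 0, by rw [_root_.zpow_zero, one_mul], ⟨0, by ring⟩⟩
      · exact fun x hx => hx.1
      · rintro α hα x ⟨hxL, e, rfl, c, hc⟩
        refine ⟨circClosed_Lab hn han hbn α hα _ hxL, ?_⟩
        rcases hα with ⟨m, hm1, hm2, rfl⟩ | ⟨l, hl1, hl2, rfl⟩
        · rw [← _root_.zpow_natCast (omegaU n) (m*a), circ_rot_ref hwjw hjj]
          exact ⟨_, rfl, c - t, by rw [hc, hnb]; ring⟩
        · rw [← _root_.zpow_natCast (omegaU n) (l*b), circ_ref_ref]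
          exact ⟨_, rfl, (l:ℤ) - c, by push_cast; rw [hc]; ring⟩
    obtain ⟨_, e, heq, c, hc⟩ := hsub hmem
    have heq' : (omegaU n)^((b:ℤ)) = (omegaU n)^e := by
      have := mul_right_cancel heq
      rw [_root_.zpow_natCast]; exact this
    have h0 : (omegaU n)^((b:ℤ) - e) = 1 := by
      rw [_root_.zpow_sub, heq', _root_.mul_inv_cancel]
    have hdvd2n := omega_inj_int hn _ h0
    have h2b : (2*(b:ℤ)) ∣ (b:ℤ) := by
      have h2b2n : (2*(b:ℤ)) ∣ 2*(n:ℤ) := ⟨2*t, by rw [hnb]; ring⟩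
      have h1 : (2*(b:ℤ)) ∣ ((b:ℤ) - e) := dvd_trans h2b2n hdvd2n
      have h2 := dvd_add h1 ⟨c, hc⟩
      simpa using h2
    have hle := Int.le_of_dvd (by exact_mod_cast hb) h2b
    omega
  · rintro ⟨t, ht⟩
    have hnb : (n:ℤ) = b*(2*t+1) := by
      have h1 : n = b*(2*t+1) := by rw [← hq, ht]
      exact_mod_cast h1
    have hα : (omegaU n)^((3*(t:ℤ)+2)*b) * jU ∈ Lab n a b :=
      ref_mem hn hbn _ ⟨3*t+2, by ring⟩
    have h1 := orb_closed hα (mem_orb_self jU)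
    have hc1 : circ ((omegaU n)^((3*(t:ℤ)+2)*b) * jU) jU
        = (omegaU n)^((3*(t:ℤ)+2)*b + -0 + (3*(t:ℤ)+2)*b) * jU := by
      have h := circ_ref_ref (w := omegaU n) (j := jU) ((3*(t:ℤ)+2)*b) 0
      rwa [_root_.zpow_zero, one_mul] at h
    rw [hc1] at h1
    have h2 := orb_closed (one_mem_Lab (b := b) hn han) h1
    have hc2 : circ (1 : ℍˣ) ((omegaU n)^((3*(t:ℤ)+2)*b + -0 + (3*(t:ℤ)+2)*b) * jU)
        = (omegaU n)^(((3*(t:ℤ)+2)*b + -0 + (3*(t:ℤ)+2)*b) - n) * jU := by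
      have h := circ_rot_ref hwjw hjj 0 ((3*(t:ℤ)+2)*(b:ℤ) + -0 + (3*(t:ℤ)+2)*b)
      rwa [_root_.zpow_zero] at h
    rw [hc2] at h2
    have hfin : (omegaU n)^b
        = (omegaU n)^((((3*(t:ℤ)+2)*(b:ℤ) + -0 + (3*(t:ℤ)+2)*b) - n)) := by
      rw [← _root_.zpow_natCast (omegaU n) b]
      apply zpow_eq_of_dvd_sub (omega_two_npow hn)
      refine ⟨-1, ?_⟩
      push_cast
      rw [hnb]; try ring
    rw [hfin]
    exact h2

end MainMem

theorem statement_12 (n a b : ℕ) (hn : 2 ≤ n) (hab : OmegaMem n a b) :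
    (orb (Lab n a b) (omegaU n ^ a) = orb (Lab n a b) 1 ↔ Odd (n / a)) ∧
    (orb (Lab n a b) (omegaU n ^ b * jU) = orb (Lab n a b) jU ↔ Odd (n / b)) := by
  obtain ⟨ha1, hab2, hbn2, han, hbn, hgcd⟩ := hab
  have hL := circClosed_Lab hn han hbn
  constructor
  · rw [orb_eq_iff hL (rot_pow_mem_Lab hn han) (one_mem_Lab hn han)]
    exact mem_rot_orbit_iff hn han hbn
  · rw [orb_eq_iff hL (ref_pow_mem_Lab hn hbn) (jU_mem_Lab hn hbn)]
    exact mem_ref_orbit_iff hn han hbn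

end
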